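/- Let $n \ge (r+1)^2$ and $q \ge r\Delta$, and let $H = H(n, r, q \mid \sigma)$ where $\sigma = (\Delta,\Delta,\dots,\Delta)$ consists of $s = r/\Delta$ equal parts $\Delta$. Then $\nu(H) = \left\lfloor \frac{n\,(q - (q \bmod \Delta))}{r} \right\rfloor$. -/

import Mathlib

/-- `K` is an edge of the σ-hypergraph `H(n,r,q | σ)` (with σ given by `a : Fin s → ℕ`). -/
def isEdge {n q s : ℕ} (a : Fin s → ℕ) (K : Finset (Fin n × Fin q)) : Prop :=
  Multiset.filter (fun x => x ≠ 0)
      (Multiset.map (fun i => (K.filter (fun v => v.1 = i)).card)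
        (Finset.univ : Finset (Fin n)).val)
    = Multiset.map a (Finset.univ : Finset (Fin s)).val

/-- `M` is a matching: a collection of pairwise disjoint edges. -/
def isMatching {n q s : ℕ} (a : Fin s → ℕ) (M : Finset (Finset (Fin n × Fin q))) : Prop :=
  (∀ E ∈ M, isEdge a E) ∧ ∀ E ∈ M, ∀ F ∈ M, E ≠ F → Disjoint E F

open Finset

/-- Characterization of the multiset condition. -/
lemma filter_nonzero_eq_rep_iff {n s Δ : ℕ} (hΔ : Δ ≠ 0) (f : Fin n → ℕ) :
    (Multiset.filter (fun x => x ≠ 0) (Multiset.map f (Finset.univ : Finset (Fin n)).val)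
      = Multiset.map (fun _ : Fin s => Δ) (Finset.univ : Finset (Fin s)).val)
    ↔ ((∀ i, f i = 0 ∨ f i = Δ) ∧
        (Finset.univ.filter (fun i => f i ≠ 0)).card = s) := by
  classical
  have h1 : Multiset.filter (fun x => x ≠ 0) (Multiset.map f (Finset.univ : Finset (Fin n)).val)
      = Multiset.map f ((Finset.univ.filter (fun i => f i ≠ 0)).val) := by
    rw [Multiset.filter_map, Finset.filter_val]
    simp [Function.comp_def]
  rw [h1, Multiset.map_const', Multiset.eq_replicate, Multiset.card_map]
  have h2 : Multiset.card (Finset.univ : Finset (Fin s)).val = s := by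
    rw [← Finset.card_def, Finset.card_univ, Fintype.card_fin]
  rw [h2, ← Finset.card_def]
  constructor
  · rintro ⟨hc, hall⟩
    refine ⟨fun i => ?_, hc⟩
    by_cases h : f i = 0
    · exact Or.inl h
    · exact Or.inr (hall _ (Multiset.mem_map.2
        ⟨i, Eq.mpr Finset.mem_val (Finset.mem_filter.2 ⟨Finset.mem_univ i, h⟩), rfl⟩))
  · rintro ⟨h01, hc⟩
    refine ⟨hc, ?_⟩
    intro b hb
    obtain ⟨i, hi, rfl⟩ := Multiset.mem_map.1 hb
    have hne : f i ≠ 0 := (Finset.mem_filter.1 (Eq.mp Finset.mem_val hi)).2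
    rcases h01 i with h | h
    · exact absurd h hne
    · exact h

lemma class_card {n q : ℕ} (i : Fin n) :
    (Finset.univ.filter (fun v : Fin n × Fin q => v.1 = i)).card = q := by
  have h : Finset.univ.filter (fun v : Fin n × Fin q => v.1 = i)
      = {i} ×ˢ (Finset.univ : Finset (Fin q)) := by
    ext v
    simp only [Finset.mem_filter, Finset.mem_univ, true_and, Finset.mem_product,
      Finset.mem_singleton, and_true]
  rw [h, Finset.card_product, Finset.card_singleton, Finset.card_univ, Fintype.card_fin, one_mul]

/-- Upper bound: any matching has at most `n * (q/Δ) / s` edges. -/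
lemma matching_card_le {n q s Δ : ℕ} (hΔ : 1 ≤ Δ) (hs : 1 ≤ s)
    (M : Finset (Finset (Fin n × Fin q))) (hM : isMatching (fun _ : Fin s => Δ) M) :
    M.card ≤ n * (q / Δ) / s := by
  classical
  rw [Nat.le_div_iff_mul_le hs]
  have hΔ0 : Δ ≠ 0 := by omega
  have hedge : ∀ E ∈ M, (∀ i : Fin n, (E.filter (fun v => v.1 = i)).card = 0 ∨
      (E.filter (fun v => v.1 = i)).card = Δ) ∧
      (Finset.univ.filter (fun i : Fin n => (E.filter (fun v => v.1 = i)).card ≠ 0)).card = s :=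
    fun E hE => (filter_nonzero_eq_rep_iff hΔ0 _).1 (hM.1 E hE)
  have hper : ∀ i : Fin n,
      (M.filter (fun E => (E.filter (fun v => v.1 = i)).card ≠ 0)).card ≤ q / Δ := by
    intro i
    rw [Nat.le_div_iff_mul_le hΔ]
    set P := M.filter (fun E => (E.filter (fun v => v.1 = i)).card ≠ 0) with hP
    have hdisj : ∀ E ∈ P, ∀ F ∈ P, E ≠ F →
        Disjoint (E.filter (fun v => v.1 = i)) (F.filter (fun v => v.1 = i)) := by
      intro E hE F hF hne
      exact Finset.disjoint_filter_filter
        (hM.2 E (Finset.mem_filter.1 hE).1 F (Finset.mem_filter.1 hF).1 hne)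
    calc P.card * Δ = ∑ _E ∈ P, Δ := by rw [Finset.sum_const, smul_eq_mul]
      _ = ∑ E ∈ P, (E.filter (fun v => v.1 = i)).card := by
          apply Finset.sum_congr rfl
          intro E hE
          have h1 := Finset.mem_filter.1 hE
          rcases (hedge E h1.1).1 i with h | h
          · exact absurd h h1.2
          · omega
      _ = (P.biUnion (fun E => E.filter (fun v => v.1 = i))).card :=
          (Finset.card_biUnion hdisj).symm
      _ ≤ (Finset.univ.filter (fun v : Fin n × Fin q => v.1 = i)).card := by
          apply Finset.card_le_card
          intro v hv
          obtain ⟨E, _, hvE⟩ := Finset.mem_biUnion.1 hv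
          exact Finset.mem_filter.2 ⟨Finset.mem_univ v, (Finset.mem_filter.1 hvE).2⟩
      _ = q := class_card i
  have h1 : M.card * s = ∑ E ∈ M,
      (Finset.univ.filter (fun i : Fin n => (E.filter (fun v => v.1 = i)).card ≠ 0)).card := by
    rw [Finset.sum_congr rfl (fun E hE => (hedge E hE).2), Finset.sum_const, smul_eq_mul]
  have h2 : ∑ E ∈ M,
      (Finset.univ.filter (fun i : Fin n => (E.filter (fun v => v.1 = i)).card ≠ 0)).card
      = ∑ i : Fin n, (M.filter (fun E => (E.filter (fun v => v.1 = i)).card ≠ 0)).card := by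
    simp only [Finset.card_filter]
    exact Finset.sum_comm
  calc M.card * s = _ := h1
    _ = _ := h2
    _ ≤ ∑ _i : Fin n, q / Δ := Finset.sum_le_sum (fun i _ => hper i)
    _ = n * (q / Δ) := by
        rw [Finset.sum_const, Finset.card_univ, Fintype.card_fin, smul_eq_mul]

/-- Vertex `k` of the block of class `i % n` at height `i / n`. -/
def vert (n q Δ : ℕ) (hn0 : 0 < n) (hq0 : 0 < q) (i k : ℕ) : Fin n × Fin q :=
  (⟨i % n, Nat.mod_lt _ hn0⟩, ⟨(Δ * (i / n) + k) % q, Nat.mod_lt _ hq0⟩)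

def vblock (n q Δ : ℕ) (hn0 : 0 < n) (hq0 : 0 < q) (i : ℕ) : Finset (Fin n × Fin q) :=
  (Finset.range Δ).image (vert n q Δ hn0 hq0 i)

def vedge (n q s Δ : ℕ) (hn0 : 0 < n) (hq0 : 0 < q) (e : ℕ) : Finset (Fin n × Fin q) :=
  (Finset.range s).biUnion (fun j => vblock n q Δ hn0 hq0 (e * s + j))

/-- Lower bound: there exists a matching with `n * (q/Δ) / s` edges. -/
lemma exists_matching {n q s Δ : ℕ} (hΔ : 1 ≤ Δ) (hs : 1 ≤ s) (hsn : s ≤ n)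
    (hn0 : 0 < n) (hq0 : 0 < q) :
    ∃ M : Finset (Finset (Fin n × Fin q)),
      isMatching (fun _ : Fin s => Δ) M ∧ M.card = n * (q / Δ) / s := by
  classical
  set t := q / Δ with ht
  set m := n * t / s with hm
  have hΔ0 : 0 < Δ := hΔ
  have hΔt : Δ * t ≤ q := by rw [ht]; have := Nat.mod_add_div q Δ; omega
  have hsm : s * m ≤ n * t := by rw [hm, mul_comm]; exact Nat.div_mul_le_self _ _
  set V : ℕ → ℕ → Fin n × Fin q := vert n q Δ hn0 hq0 with hV
  set B : ℕ → Finset (Fin n × Fin q) := vblock n q Δ hn0 hq0 with hB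
  set E : ℕ → Finset (Fin n × Fin q) := vedge n q s Δ hn0 hq0 with hE
  -- second coordinates in range
  have hvsnd : ∀ i k, i < n * t → k < Δ → (Δ * (i / n) + k) % q = Δ * (i / n) + k := by
    intro i k hi hk
    apply Nat.mod_eq_of_lt
    have h1 : i / n < t := (Nat.div_lt_iff_lt_mul hn0).2 (by rwa [mul_comm n t] at hi)
    have h2 : Δ * (i / n + 1) ≤ Δ * t := Nat.mul_le_mul_left Δ (by omega)
    have h3 : Δ * (i / n + 1) = Δ * (i / n) + Δ := by ring
    linarith
  -- injectivity of vert on the relevant domain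
  have hvinj : ∀ i k i' k', i < n * t → i' < n * t → k < Δ → k' < Δ →
      V i k = V i' k' → i = i' ∧ k = k' := by
    intro i k i' k' hi hi' hk hk' hv
    rw [hV] at hv
    simp only [vert, Prod.mk.injEq, Fin.mk.injEq] at hv
    obtain ⟨h1, h2⟩ := hv
    rw [hvsnd i k hi hk, hvsnd i' k' hi' hk'] at h2
    have hd : i / n = i' / n := by
      have := congrArg (· / Δ) h2
      simpa [Nat.mul_add_div hΔ0, Nat.div_eq_of_lt hk, Nat.div_eq_of_lt hk'] using this
    have hk2 : k = k' := by
      have := congrArg (· % Δ) h2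
      simpa [Nat.mul_add_mod, Nat.mod_eq_of_lt hk, Nat.mod_eq_of_lt hk'] using this
    refine ⟨?_, hk2⟩
    rw [← Nat.div_add_mod i n, ← Nat.div_add_mod i' n, hd, h1]
  -- blocks
  have hBfst : ∀ i v, v ∈ B i → (v.1 : Fin n).val = i % n := by
    intro i v hv
    rw [hB] at hv
    simp only [vblock, Finset.mem_image, Finset.mem_range] at hv
    obtain ⟨k, _, rfl⟩ := hv
    rfl
  have hBfilter : ∀ i (c : Fin n),
      (B i).filter (fun v => v.1 = c) = if i % n = c.val then B i else ∅ := by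
    intro i c
    split_ifs with h
    · apply Finset.filter_true_of_mem
      intro v hv
      exact Fin.ext (by rw [hBfst i v hv, h])
    · apply Finset.filter_false_of_mem
      intro v hv hvc
      exact h (by rw [← hBfst i v hv, hvc])
  have hBcard : ∀ i, i < n * t → (B i).card = Δ := by
    intro i hi
    rw [hB]
    unfold vblock
    rw [Finset.card_image_of_injOn, Finset.card_range]
    intro k hk k' hk' hkk
    exact (hvinj i k i k' hi hi (Finset.mem_range.1 hk) (Finset.mem_range.1 hk') hkk).2
  have hBdisj : ∀ i i', i < n * t → i' < n * t → i ≠ i' → Disjoint (B i) (B i') := by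
    intro i i' hi hi' hne
    rw [Finset.disjoint_left]
    intro v hv hv'
    rw [hB] at hv hv'
    simp only [vblock, Finset.mem_image, Finset.mem_range] at hv hv'
    obtain ⟨k, hk, rfl⟩ := hv
    obtain ⟨k', hk', hkk⟩ := hv'
    exact hne ((hvinj i' k' i k hi' hi hk' hk hkk).1).symm
  -- edges
  have hEidx : ∀ e j, e < m → j < s → e * s + j < n * t := by
    intro e j he hj
    have h1 : e * s + j < (e + 1) * s := by
      have h : (e + 1) * s = e * s + s := by ring
      omega
    have h2 : (e + 1) * s ≤ m * s := Nat.mul_le_mul_right s (by omega)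
    have h3 : m * s = s * m := mul_comm m s
    linarith
  have hres : ∀ e j j', j < s → j' < s → (e * s + j) % n = (e * s + j') % n → j = j' := by
    intro e j j' hj hj' h
    have h1 : j % n = j' % n := Nat.ModEq.add_left_cancel' (e * s) h
    rwa [Nat.mod_eq_of_lt (lt_of_lt_of_le hj hsn),
      Nat.mod_eq_of_lt (lt_of_lt_of_le hj' hsn)] at h1
  -- the class set of edge e
  set C : ℕ → Finset (Fin n) := fun e =>
    (Finset.range s).image (fun j => (⟨(e * s + j) % n, Nat.mod_lt _ hn0⟩ : Fin n)) with hC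
  have hCcard : ∀ e, (C e).card = s := by
    intro e
    rw [hC]
    simp only []
    rw [Finset.card_image_of_injOn, Finset.card_range]
    intro j hj j' hj' h
    exact hres e j j' (Finset.mem_range.1 hj) (Finset.mem_range.1 hj')
      (congrArg Fin.val h)
  have hfval : ∀ e, e < m → ∀ c : Fin n,
      ((E e).filter (fun v => v.1 = c)).card = if c ∈ C e then Δ else 0 := by
    intro e he c
    have hfb : (E e).filter (fun v => v.1 = c)
        = (Finset.range s).biUnion (fun j => (B (e * s + j)).filter (fun v => v.1 = c)) := by
      rw [hE]
      unfold vedge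
      rw [Finset.filter_biUnion]
    rw [hfb, Finset.card_biUnion]
    · have hterm : ∀ j ∈ Finset.range s, ((B (e * s + j)).filter (fun v => v.1 = c)).card
          = if (e * s + j) % n = c.val then Δ else 0 := by
        intro j hj
        rw [hBfilter]
        split_ifs with h
        · exact hBcard _ (hEidx e j he (Finset.mem_range.1 hj))
        · exact Finset.card_empty
      rw [Finset.sum_congr rfl hterm]
      by_cases hc : c ∈ C e
      · rw [if_pos hc]
        rw [hC] at hc
        simp only [Finset.mem_image, Finset.mem_range] at hc
        obtain ⟨j₀, hj₀, hcj⟩ := hc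
        have hcval : c.val = (e * s + j₀) % n := by rw [← hcj]
        rw [Finset.sum_eq_single_of_mem j₀ (Finset.mem_range.2 hj₀)]
        · rw [if_pos hcval.symm]
        · intro b hb hbne
          apply if_neg
          intro hbc
          exact hbne (hres e b j₀ (Finset.mem_range.1 hb) hj₀ (by rw [hbc, hcval]))
      · rw [if_neg hc]
        apply Finset.sum_eq_zero
        intro j hj
        apply if_neg
        intro hjc
        apply hc
        rw [hC]
        simp only [Finset.mem_image, Finset.mem_range]
        exact ⟨j, Finset.mem_range.1 hj, Fin.ext hjc⟩
    · intro j hj j' hj' hne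
      exact Finset.disjoint_filter_filter
        (hBdisj _ _ (hEidx e j he (Finset.mem_range.1 hj))
          (hEidx e j' he (Finset.mem_range.1 hj')) (by
            intro h
            exact hne (by omega)))
  have hisEdge : ∀ e, e < m → isEdge (fun _ : Fin s => Δ) (E e) := by
    intro e he
    unfold isEdge
    apply (filter_nonzero_eq_rep_iff (show Δ ≠ 0 by omega) _).2
    constructor
    · intro c
      rw [hfval e he c]
      split_ifs with h
      · exact Or.inr rfl
      · exact Or.inl rfl
    · have hfil : Finset.univ.filter
          (fun c : Fin n => ((E e).filter (fun v => v.1 = c)).card ≠ 0) = C e := by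
        ext c
        rw [Finset.mem_filter, hfval e he c]
        constructor
        · rintro ⟨-, h⟩
          by_contra hc
          rw [if_neg hc] at h
          exact h rfl
        · intro hc
          refine ⟨Finset.mem_univ c, ?_⟩
          rw [if_pos hc]
          omega
      rw [hfil, hCcard]
  have hEdisj : ∀ e e', e < m → e' < m → e ≠ e' → Disjoint (E e) (E e') := by
    intro e e' he he' hne
    rw [Finset.disjoint_left]
    intro v hv hv'
    rw [hE] at hv hv'
    simp only [vedge, Finset.mem_biUnion, Finset.mem_range] at hv hv'
    obtain ⟨j, hj, hvj⟩ := hv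
    obtain ⟨j', hj', hvj'⟩ := hv'
    simp only [vblock, Finset.mem_image, Finset.mem_range] at hvj hvj'
    obtain ⟨k, hk, rfl⟩ := hvj
    obtain ⟨k', hk', hkk⟩ := hvj'
    have heq := (hvinj _ _ _ _ (hEidx e' j' he' hj') (hEidx e j he hj) hk' hk hkk).1
    have hdiv : ∀ a b : ℕ, b < s → (a * s + b) / s = a := by
      intro a b hb
      rw [mul_comm, Nat.mul_add_div hs, Nat.div_eq_of_lt hb, add_zero]
    apply hne
    have := congrArg (· / s) heq
    simpa [hdiv e' j' hj', hdiv e j hj] using this.symm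
  have hEne : ∀ e, (E e).Nonempty := by
    intro e
    refine ⟨V (e * s + 0) 0, ?_⟩
    rw [hE]
    simp only [vedge, Finset.mem_biUnion, Finset.mem_range]
    refine ⟨0, hs, ?_⟩
    rw [hB] at *
    simp only [vblock, Finset.mem_image, Finset.mem_range]
    exact ⟨0, hΔ0, rfl⟩
  refine ⟨(Finset.range m).image E, ⟨?_, ?_⟩, ?_⟩
  · intro K hK
    obtain ⟨e, he, rfl⟩ := Finset.mem_image.1 hK
    exact hisEdge e (Finset.mem_range.1 he)
  · intro K hK F hF hne
    obtain ⟨e, he, rfl⟩ := Finset.mem_image.1 hK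
    obtain ⟨e', he', rfl⟩ := Finset.mem_image.1 hF
    exact hEdisj e e' (Finset.mem_range.1 he) (Finset.mem_range.1 he')
      (fun h => hne (by rw [h]))
  · rw [Finset.card_image_of_injOn, Finset.card_range]
    intro e he e' he' h
    by_contra hne
    have hd := hEdisj e e' (Finset.mem_range.1 he) (Finset.mem_range.1 he') hne
    rw [h] at hd
    exact (hEne e').ne_empty ((Finset.disjoint_self_iff_empty _).1 hd)

theorem stmt_9 (n r q s Δ : ℕ)
    (hΔ : 1 ≤ Δ) (hsΔ : s * Δ = r) (hs : 1 ≤ s)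
    (hn : (r + 1) ^ 2 ≤ n) (hq : r * Δ ≤ q) :
    IsGreatest
      {m | ∃ M : Finset (Finset (Fin n × Fin q)),
        isMatching (fun _ : Fin s => Δ) M ∧ M.card = m}
      (n * (q - q % Δ) / r) := by
  have hr1 : 1 ≤ r := by nlinarith
  have hq0 : 0 < q := lt_of_lt_of_le (by nlinarith) hq
  have hn0 : 0 < n := lt_of_lt_of_le (by positivity) hn
  have hrn : r < n := by nlinarith [sq_nonneg r]
  have hsn : s ≤ n := by nlinarith
  have hval : n * (q - q % Δ) / r = n * (q / Δ) / s := by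
    have h1 : q - q % Δ = Δ * (q / Δ) := by have := Nat.mod_add_div q Δ; omega
    have h2 : n * (Δ * (q / Δ)) = n * (q / Δ) * Δ := by ring
    rw [h1, ← hsΔ, h2, Nat.mul_div_mul_right _ _ hΔ]
  constructor
  · obtain ⟨M, hM, hMc⟩ := exists_matching hΔ hs hsn hn0 hq0
    exact ⟨M, hM, by rw [hMc, hval]⟩
  · rintro x ⟨M, hM, rfl⟩
    rw [hval]
    exact matching_card_le hΔ hs M hM
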